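/- The solution achieves asymptotic consensus: the global diameter d(t) := max{ max_{i,j=1,…,N} |x_i(t) − x_j(t)|, max_{i,j=1,…,M} |y_i(t) − y_j(t)|, max_{i=1,…,N} max_{j=1,…,M} |x_i(t) − y_j(t)| } satisfies d(t) → 0 as t → +∞. -/

import Mathlib

open Real Set Filter Topology
open scoped BigOperators RealInnerProductSpace

noncomputable section

/-- `Λ` : the maximum of the sup-norms of the four (positive) influence functions. -/
def Lam {d : ℕ} (ψ ψs φ φs : EuclideanSpace ℝ (Fin d) → EuclideanSpace ℝ (Fin d) → ℝ) : ℝ :=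
  max
    (max (⨆ p : EuclideanSpace ℝ (Fin d) × EuclideanSpace ℝ (Fin d), ψ p.1 p.2)
         (⨆ p : EuclideanSpace ℝ (Fin d) × EuclideanSpace ℝ (Fin d), ψs p.1 p.2))
    (max (⨆ p : EuclideanSpace ℝ (Fin d) × EuclideanSpace ℝ (Fin d), φ p.1 p.2)
         (⨆ p : EuclideanSpace ℝ (Fin d) × EuclideanSpace ℝ (Fin d), φs p.1 p.2))

/-- An influence function is admissible when it is continuous, positive and bounded. -/
def Admissible {d : ℕ} (f : EuclideanSpace ℝ (Fin d) → EuclideanSpace ℝ (Fin d) → ℝ) : Prop :=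
  Continuous (fun p : EuclideanSpace ℝ (Fin d) × EuclideanSpace ℝ (Fin d) => f p.1 p.2) ∧
    (∀ z₁ z₂, 0 < f z₁ z₂) ∧
    BddAbove (Set.range fun p : EuclideanSpace ℝ (Fin d) × EuclideanSpace ℝ (Fin d) => f p.1 p.2)

/-- `(x, y)` is a global classical solution of the two-population delayed
Hegselmann–Krause system, with `k` (resp. `h`) leaders in the first (resp. second)
population and time delay `τ`. -/
structure IsSol {d N M : ℕ} (h k : ℕ) (τ : ℝ)
    (ψ ψs φ φs : EuclideanSpace ℝ (Fin d) → EuclideanSpace ℝ (Fin d) → ℝ)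
    (x : Fin N → ℝ → EuclideanSpace ℝ (Fin d))
    (y : Fin M → ℝ → EuclideanSpace ℝ (Fin d)) : Prop where
  contx : ∀ i, Continuous (x i)
  conty : ∀ j, Continuous (y j)
  odex_lead : ∀ i : Fin N, (i : ℕ) < k → ∀ t : ℝ, 0 < t →
    HasDerivAt (x i)
      ((∑ j ∈ Finset.univ.erase i,
          (ψ (x i t) (x j t) / ((N : ℝ) + h - 1)) • (x j t - x i t)) +
        ∑ j ∈ Finset.univ.filter (fun j : Fin M => (j : ℕ) < h),
          (φ (x i t) (y j (t - τ)) / ((N : ℝ) + h - 1)) • (y j (t - τ) - x i t)) t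
  odex_foll : ∀ i : Fin N, k ≤ (i : ℕ) → ∀ t : ℝ, 0 < t →
    HasDerivAt (x i)
      (∑ j ∈ Finset.univ.erase i,
          (ψ (x i t) (x j t) / ((N : ℝ) - 1)) • (x j t - x i t)) t
  odey_lead : ∀ i : Fin M, (i : ℕ) < h → ∀ t : ℝ, 0 < t →
    HasDerivAt (y i)
      ((∑ j ∈ Finset.univ.erase i,
          (ψs (y i t) (y j t) / ((M : ℝ) + k - 1)) • (y j t - y i t)) +
        ∑ j ∈ Finset.univ.filter (fun j : Fin N => (j : ℕ) < k),
          (φs (y i t) (x j (t - τ)) / ((M : ℝ) + k - 1)) • (x j (t - τ) - y i t)) t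
  odey_foll : ∀ i : Fin M, h ≤ (i : ℕ) → ∀ t : ℝ, 0 < t →
    HasDerivAt (y i)
      (∑ j ∈ Finset.univ.erase i,
          (ψs (y i t) (y j t) / ((M : ℝ) - 1)) • (y j t - y i t)) t

/-- `m_0` : the minimum of the projections on `v` of the initial data. -/
def mInit {d N M : ℕ} (h k : ℕ) (τ : ℝ) (v : EuclideanSpace ℝ (Fin d))
    (x : Fin N → ℝ → EuclideanSpace ℝ (Fin d))
    (y : Fin M → ℝ → EuclideanSpace ℝ (Fin d)) : ℝ :=
  min
    (min (⨅ p : {i : Fin N // (i : ℕ) < k} × (Icc (-τ) (0 : ℝ)), ⟪x p.1.1 (p.2 : ℝ), v⟫)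
         (⨅ i : {i : Fin N // k ≤ (i : ℕ)}, ⟪x i.1 0, v⟫))
    (min (⨅ p : {j : Fin M // (j : ℕ) < h} × (Icc (-τ) (0 : ℝ)), ⟪y p.1.1 (p.2 : ℝ), v⟫)
         (⨅ j : {j : Fin M // h ≤ (j : ℕ)}, ⟪y j.1 0, v⟫))

/-- `M_0` : the maximum of the projections on `v` of the initial data. -/
def MInit {d N M : ℕ} (h k : ℕ) (τ : ℝ) (v : EuclideanSpace ℝ (Fin d))
    (x : Fin N → ℝ → EuclideanSpace ℝ (Fin d))
    (y : Fin M → ℝ → EuclideanSpace ℝ (Fin d)) : ℝ :=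
  max
    (max (⨆ p : {i : Fin N // (i : ℕ) < k} × (Icc (-τ) (0 : ℝ)), ⟪x p.1.1 (p.2 : ℝ), v⟫)
         (⨆ i : {i : Fin N // k ≤ (i : ℕ)}, ⟪x i.1 0, v⟫))
    (max (⨆ p : {j : Fin M // (j : ℕ) < h} × (Icc (-τ) (0 : ℝ)), ⟪y p.1.1 (p.2 : ℝ), v⟫)
         (⨆ j : {j : Fin M // h ≤ (j : ℕ)}, ⟪y j.1 0, v⟫))

/-- `C_0` : the maximum of the norms of the initial data. -/
def Cinit {d N M : ℕ} (h k : ℕ) (τ : ℝ)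
    (x : Fin N → ℝ → EuclideanSpace ℝ (Fin d))
    (y : Fin M → ℝ → EuclideanSpace ℝ (Fin d)) : ℝ :=
  max
    (max (⨆ p : {i : Fin N // (i : ℕ) < k} × (Icc (-τ) (0 : ℝ)), ‖x p.1.1 (p.2 : ℝ)‖)
         (⨆ i : {i : Fin N // k ≤ (i : ℕ)}, ‖x i.1 0‖))
    (max (⨆ p : {j : Fin M // (j : ℕ) < h} × (Icc (-τ) (0 : ℝ)), ‖y p.1.1 (p.2 : ℝ)‖)
         (⨆ j : {j : Fin M // h ≤ (j : ℕ)}, ‖y j.1 0‖))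

/-- the minimum of an influence function on the ball of radius `C` (in each variable). -/
def minOnBall {d : ℕ} (C : ℝ)
    (f : EuclideanSpace ℝ (Fin d) → EuclideanSpace ℝ (Fin d) → ℝ) : ℝ :=
  ⨅ p : {z : EuclideanSpace ℝ (Fin d) × EuclideanSpace ℝ (Fin d) // ‖z.1‖ ≤ C ∧ ‖z.2‖ ≤ C},
    f p.1.1 p.1.2

/-- `Γ := min {ψ₀, ψ*₀, φ₀, φ*₀}`. -/
def Gam {d N M : ℕ} (h k : ℕ) (τ : ℝ)
    (ψ ψs φ φs : EuclideanSpace ℝ (Fin d) → EuclideanSpace ℝ (Fin d) → ℝ)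
    (x : Fin N → ℝ → EuclideanSpace ℝ (Fin d))
    (y : Fin M → ℝ → EuclideanSpace ℝ (Fin d)) : ℝ :=
  min (min (minOnBall (Cinit h k τ x y) ψ) (minOnBall (Cinit h k τ x y) ψs))
      (min (minOnBall (Cinit h k τ x y) φ) (minOnBall (Cinit h k τ x y) φs))

/-- `m_n` : minimum of the projections on `v` over the time mesh `I_n = [(6n-1)τ, 6nτ]`. -/
def mSeq {d N M : ℕ} (h k : ℕ) (τ : ℝ) (v : EuclideanSpace ℝ (Fin d))
    (x : Fin N → ℝ → EuclideanSpace ℝ (Fin d))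
    (y : Fin M → ℝ → EuclideanSpace ℝ (Fin d)) (n : ℕ) : ℝ :=
  min
    (min (⨅ p : {i : Fin N // (i : ℕ) < k} × (Icc ((6 * (n : ℝ) - 1) * τ) (6 * (n : ℝ) * τ)),
            ⟪x p.1.1 (p.2 : ℝ), v⟫)
         (⨅ i : {i : Fin N // k ≤ (i : ℕ)}, ⟪x i.1 (6 * (n : ℝ) * τ), v⟫))
    (min (⨅ p : {j : Fin M // (j : ℕ) < h} × (Icc ((6 * (n : ℝ) - 1) * τ) (6 * (n : ℝ) * τ)),
            ⟪y p.1.1 (p.2 : ℝ), v⟫)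
         (⨅ j : {j : Fin M // h ≤ (j : ℕ)}, ⟪y j.1 (6 * (n : ℝ) * τ), v⟫))

/-- `M_n` : maximum of the projections on `v` over the time mesh `I_n = [(6n-1)τ, 6nτ]`. -/
def MSeq {d N M : ℕ} (h k : ℕ) (τ : ℝ) (v : EuclideanSpace ℝ (Fin d))
    (x : Fin N → ℝ → EuclideanSpace ℝ (Fin d))
    (y : Fin M → ℝ → EuclideanSpace ℝ (Fin d)) (n : ℕ) : ℝ :=
  max
    (max (⨆ p : {i : Fin N // (i : ℕ) < k} × (Icc ((6 * (n : ℝ) - 1) * τ) (6 * (n : ℝ) * τ)),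
            ⟪x p.1.1 (p.2 : ℝ), v⟫)
         (⨆ i : {i : Fin N // k ≤ (i : ℕ)}, ⟪x i.1 (6 * (n : ℝ) * τ), v⟫))
    (max (⨆ p : {j : Fin M // (j : ℕ) < h} × (Icc ((6 * (n : ℝ) - 1) * τ) (6 * (n : ℝ) * τ)),
            ⟪y p.1.1 (p.2 : ℝ), v⟫)
         (⨆ j : {j : Fin M // h ≤ (j : ℕ)}, ⟪y j.1 (6 * (n : ℝ) * τ), v⟫))


/-- mono from derivative -/
lemma mono_aux {F : ℝ → ℝ} {a b : ℝ} (hab : a ≤ b)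
    (hc : ContinuousOn F (Icc a b))
    (hd : ∀ t ∈ Ioo a b, ∃ F', HasDerivAt F F' t ∧ 0 ≤ F') : F a ≤ F b := by
  have hmono : MonotoneOn F (Icc a b) := by
    apply monotoneOn_of_deriv_nonneg (convex_Icc a b) hc
    · intro t ht
      rw [interior_Icc] at ht
      obtain ⟨F', hF', _⟩ := hd t ht
      exact hF'.differentiableAt.differentiableWithinAt
    · intro t ht
      rw [interior_Icc] at ht
      obtain ⟨F', hF', h0⟩ := hd t ht
      rw [hF'.deriv]; exact h0
  exact hmono (left_mem_Icc.2 hab) (right_mem_Icc.2 hab) hab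

/-- scalar Gronwall-type comparison with constant forcing. -/
lemma scalarGron {u uD : ℝ → ℝ} {Λ c K : ℝ} {a b : ℝ} (hΛ : 0 < Λ) (hab : a ≤ b)
    (hcont : ContinuousOn u (Icc a b))
    (hder : ∀ t ∈ Ioo a b, HasDerivAt u (uD t) t)
    (hineq : ∀ t ∈ Ioo a b, uD t ≤ Λ * (K - u t) - c) :
    c / Λ + Real.exp (-Λ * (b - a)) * (K - u a - c / Λ) ≤ K - u b := by
  set F : ℝ → ℝ := fun t => Real.exp (Λ * t) * (K - c / Λ - u t) with hF
  have hFab : F a ≤ F b := by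
    apply mono_aux hab
    · exact (Real.continuous_exp.comp (continuous_const.mul continuous_id)).continuousOn.mul
        (continuousOn_const.sub hcont)
    · intro t ht
      refine ⟨Real.exp (Λ * t) * (Λ * (K - u t) - c - uD t), ?_, ?_⟩
      · have h1 : HasDerivAt (fun t => Real.exp (Λ * t)) (Λ * Real.exp (Λ * t)) t := by
          have := (Real.hasDerivAt_exp (Λ * t)).comp t ((hasDerivAt_id t).const_mul Λ)
          simp only [mul_one] at this
          rw [mul_comm]; exact this
        have h2 : HasDerivAt (fun t => K - c / Λ - u t) (-uD t) t := by
          simpa using ((hder t ht).const_sub (K - c / Λ))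
        have := h1.mul h2
        refine this.congr_deriv ?_
        have e1 : Λ * (c / Λ) = c := by field_simp [hΛ.ne']
        linear_combination (-(Real.exp (Λ * t))) * e1
      · have h3 := hineq t ht
        exact mul_nonneg (Real.exp_pos _).le (by linarith)
  -- unfold
  have hepos : (0:ℝ) < Real.exp (Λ * b) := Real.exp_pos _
  have key : K - c / Λ - u b ≥ Real.exp (-Λ * (b - a)) * (K - c / Λ - u a) := by
    have h2 : Real.exp (-Λ * (b - a)) * (K - c / Λ - u a) = F a / Real.exp (Λ * b) := by
      rw [hF]
      rw [eq_div_iff (ne_of_gt hepos)]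
      show _ = Real.exp (Λ * a) * (K - c / Λ - u a)
      rw [mul_comm (Real.exp (-Λ * (b-a))) _, mul_assoc, ← Real.exp_add]
      ring_nf
    rw [h2, ge_iff_le, div_le_iff₀ hepos]
    calc F a ≤ F b := hFab
    _ = (K - c / Λ - u b) * Real.exp (Λ * b) := by rw [hF]; ring
  have heq : K - u a - c / Λ = K - c / Λ - u a := by ring
  rw [heq]
  linarith [key]
noncomputable section

structure NetSys (ι : Type) [Fintype ι] [DecidableEq ι] (d : ℕ) (τ Λ γ C : ℝ) where
  z : ι → ℝ → EuclideanSpace ℝ (Fin d)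
  S : ι → Finset ι
  dly : ι → ι → ℝ
  w : ι → ι → ℝ → ℝ
  pop : ι → Bool
  lead : ι → Prop
  cont : ∀ α, Continuous (z α)
  hτ : 0 < τ
  hγ : 0 < γ
  hγΛ : γ ≤ Λ
  hdly0 : ∀ α β, dly α β = 0 ∨ dly α β = τ
  hw0 : ∀ α β t, 0 ≤ w α β t
  hwsum : ∀ α t, ∑ β ∈ S α, w α β t ≤ Λ
  hode : ∀ α t, 0 < t → HasDerivAt (z α) (∑ β ∈ S α, w α β t • (z β (t - dly α β) - z α t)) t
  hlead : ∀ α β, β ∈ S α → dly α β ≠ 0 → lead β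
  hsame : ∀ α β, pop α = pop β → α ≠ β → β ∈ S α ∧ dly α β = 0
  hcross : ∀ α β, lead α → lead β → pop α ≠ pop β → β ∈ S α ∧ dly α β = τ
  hex : ∀ b : Bool, ∃ α, pop α = b ∧ lead α
  hwγ : ∀ α β t, β ∈ S α → 0 < t → ‖z α t‖ ≤ C → ‖z β (t - dly α β)‖ ≤ C → γ ≤ w α β t

namespace NetSys

variable {ι : Type} [Fintype ι] [DecidableEq ι] {d : ℕ} {τ Λ γ C : ℝ}

/-- projection of state on direction `v`. -/
def u (P : NetSys ι d τ Λ γ C) (v : EuclideanSpace ℝ (Fin d)) (α : ι) (t : ℝ) : ℝ := ⟪v, P.z α t⟫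

lemma hΛ (P : NetSys ι d τ Λ γ C) : 0 < Λ := lt_of_lt_of_le P.hγ P.hγΛ

lemma contu (P : NetSys ι d τ Λ γ C) (v : EuclideanSpace ℝ (Fin d)) (α : ι) : Continuous (P.u v α) :=
  (innerSL ℝ v).continuous.comp (P.cont α)

lemma hasDerivAt_u (P : NetSys ι d τ Λ γ C) (v : EuclideanSpace ℝ (Fin d)) (α : ι) (t : ℝ) (ht : 0 < t) :
    HasDerivAt (P.u v α)
      (∑ β ∈ P.S α, P.w α β t * (P.u v β (t - P.dly α β) - P.u v α t)) t := by
  have h : HasDerivAt (P.u v α) ((innerSL ℝ v) (∑ β ∈ P.S α, P.w α β t • (P.z β (t - P.dly α β) - P.z α t))) t :=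
    (innerSL ℝ v).hasFDerivAt.comp_hasDerivAt t (P.hode α t ht)
  convert h using 1
  simp only [map_sum, ContinuousLinearMap.map_smul]
  refine Finset.sum_congr rfl fun β _ => ?_
  simp [u, smul_eq_mul, inner_sub_right]

/-- the basic derivative inequality, with a special source pulled down by `δ`. -/
lemma deriv_ineq (P : NetSys ι d τ Λ γ C) (v : EuclideanSpace ℝ (Fin d)) (α : ι) (t : ℝ) (K δ c0 : ℝ)
    (hδ : 0 ≤ δ)
    (hR : ∀ β ∈ P.S α, P.u v β (t - P.dly α β) ≤ K)
    (hU : P.u v α t ≤ K)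
    (hc0 : c0 = 0 ∨ ∃ σ ∈ P.S α, c0 = γ * δ ∧ γ ≤ P.w α σ t ∧ P.u v σ (t - P.dly α σ) ≤ K - δ) :
    ∑ β ∈ P.S α, P.w α β t * (P.u v β (t - P.dly α β) - P.u v α t) ≤ Λ * (K - P.u v α t) - c0 := by
  have hKu : 0 ≤ K - P.u v α t := by linarith
  rcases hc0 with rfl | ⟨σ, hσ, rfl, hγw, hspec⟩
  · calc ∑ β ∈ P.S α, P.w α β t * (P.u v β (t - P.dly α β) - P.u v α t)
        ≤ ∑ β ∈ P.S α, P.w α β t * (K - P.u v α t) := by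
          refine Finset.sum_le_sum fun β hβ => ?_
          exact mul_le_mul_of_nonneg_left (by linarith [hR β hβ]) (P.hw0 α β t)
      _ = (∑ β ∈ P.S α, P.w α β t) * (K - P.u v α t) := by rw [Finset.sum_mul]
      _ ≤ Λ * (K - P.u v α t) := mul_le_mul_of_nonneg_right (P.hwsum α t) hKu
      _ = Λ * (K - P.u v α t) - 0 := by ring
  · calc ∑ β ∈ P.S α, P.w α β t * (P.u v β (t - P.dly α β) - P.u v α t)
        ≤ ∑ β ∈ P.S α, (P.w α β t * (K - P.u v α t) - if β = σ then γ * δ else 0) := by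
          refine Finset.sum_le_sum fun β hβ => ?_
          by_cases hβσ : β = σ
          · subst hβσ
            simp only [if_pos rfl]
            have h1 : P.u v β (t - P.dly α β) - P.u v α t ≤ (K - P.u v α t) - δ := by
              linarith [hspec]
            calc P.w α β t * (P.u v β (t - P.dly α β) - P.u v α t)
                ≤ P.w α β t * ((K - P.u v α t) - δ) :=
                  mul_le_mul_of_nonneg_left h1 (P.hw0 α β t)
              _ = P.w α β t * (K - P.u v α t) - P.w α β t * δ := by ring
              _ ≤ P.w α β t * (K - P.u v α t) - γ * δ := by
                  have := mul_le_mul_of_nonneg_right hγw hδ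
                  linarith
          · simp only [if_neg hβσ, sub_zero]
            exact mul_le_mul_of_nonneg_left (by linarith [hR β hβ]) (P.hw0 α β t)
      _ = (∑ β ∈ P.S α, P.w α β t) * (K - P.u v α t) - γ * δ := by
          rw [Finset.sum_sub_distrib, Finset.sum_mul, Finset.sum_ite_eq' (P.S α) σ (fun _ => γ * δ),
            if_pos hσ]
      _ ≤ Λ * (K - P.u v α t) - γ * δ := by
          have := mul_le_mul_of_nonneg_right (P.hwsum α t) hKu
          linarith



lemma invariance (P : NetSys ι d τ Λ γ C) (v : EuclideanSpace ℝ (Fin d)) (K a : ℝ)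
    (ha : 0 ≤ a)
    (hK0 : ∀ α, P.u v α a ≤ K)
    (hwin : ∀ β, P.lead β → ∀ s, a - τ ≤ s → s ≤ a → P.u v β s ≤ K) :
    ∀ α t, a ≤ t → P.u v α t ≤ K := by
  intro α₁ t₁ ht₁
  refine le_of_forall_pos_le_add ?_
  intro ε hε
  by_contra hcon
  push_neg at hcon
  set Sb : Set ℝ := {s | s ∈ Icc a t₁ ∧ ∃ α, K + ε ≤ P.u v α s} with hSbdef
  have hSb_closed : IsClosed Sb := by
    have : Sb = (Icc a t₁) ∩ (⋃ α, {s | K + ε ≤ P.u v α s}) := by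
      ext s; simp [hSbdef, Set.mem_iUnion, and_comm]
    rw [this]
    exact isClosed_Icc.inter (isClosed_iUnion_of_finite fun α =>
      isClosed_le continuous_const (P.contu v α))
  have hne : Sb.Nonempty := ⟨t₁, ⟨⟨ht₁, le_refl _⟩, α₁, by linarith⟩⟩
  have hbdd : BddBelow Sb := ⟨a, fun s hs => hs.1.1⟩
  set ts := sInf Sb with hts
  have htsmem : ts ∈ Sb := hSb_closed.csInf_mem hne hbdd
  obtain ⟨⟨hta', hts1⟩, αs, hαs⟩ := htsmem
  have hta : a < ts := by
    rcases lt_or_eq_of_le hta' with h | h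
    · exact h
    · exfalso; rw [← h] at hαs; linarith [hK0 αs]
  have hbefore : ∀ s, a ≤ s → s < ts → ∀ α, P.u v α s ≤ K + ε := by
    intro s hs1 hs2 α
    by_contra hc
    push_neg at hc
    have : s ∈ Sb := ⟨⟨hs1, le_trans hs2.le hts1⟩, α, hc.le⟩
    exact absurd (csInf_le hbdd this) (not_le.2 hs2)
  have hatstar : ∀ α, P.u v α ts ≤ K + ε := by
    intro α
    refine le_of_tendsto (((P.contu v α).tendsto ts).mono_left (nhdsWithin_le_nhds : 𝓝[Set.Iio ts] ts ≤ _)) ?_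
    filter_upwards [Ioo_mem_nhdsLT_of_mem (Set.mem_Ioc.2 ⟨hta, le_refl _⟩)] with s hs
    exact hbefore s hs.1.le hs.2 α
  have hIcc : ∀ s ∈ Set.Icc a ts, ∀ α, P.u v α s ≤ K + ε := by
    intro s hs α
    rcases lt_or_eq_of_le hs.2 with h | h
    · exact hbefore s hs.1 h α
    · rw [h]; exact hatstar α
  have hub := scalarGron (u := P.u v αs)
      (uD := fun s => ∑ β ∈ P.S αs, P.w αs β s * (P.u v β (s - P.dly αs β) - P.u v αs s))
      (Λ := Λ) (c := 0) (K := K + ε) (P.hΛ) hta.le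
      ((P.contu v αs).continuousOn)
      (fun s hs => P.hasDerivAt_u v αs s (lt_of_le_of_lt ha hs.1))
      (fun s hs => by
        refine P.deriv_ineq v αs s (K + ε) 0 0 le_rfl ?_ ?_ (Or.inl rfl)
        · intro β hβ
          rcases P.hdly0 αs β with h0 | h0
          · rw [h0, sub_zero]
            exact hIcc s ⟨hs.1.le, hs.2.le⟩ β
          · rw [h0]
            rcases le_or_gt a (s - τ) with h1 | h1
            · refine hIcc (s - τ) ⟨h1, by linarith [P.hτ, hs.2]⟩ β
            · have hl : P.lead β := P.hlead αs β hβ (by rw [h0]; exact ne_of_gt P.hτ)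
              have := hwin β hl (s - τ) (by linarith [hs.1]) h1.le
              linarith
        · exact hIcc s ⟨hs.1.le, hs.2.le⟩ αs)
  have h2 : ε ≤ K + ε - P.u v αs a - 0 / Λ := by
    have := hK0 αs; simp only [zero_div]; linarith
  have h3 : Real.exp (-Λ * (ts - a)) * ε ≤ Real.exp (-Λ * (ts - a)) * (K + ε - P.u v αs a - 0 / Λ) :=
    mul_le_mul_of_nonneg_left h2 (Real.exp_pos _).le
  have h1 : 0 < Real.exp (-Λ * (ts - a)) * ε := by positivity
  have h0 : (0:ℝ) / Λ = 0 := zero_div _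
  linarith [hub, h1, h3, hαs]

/-- decay estimate: without special source. -/
lemma decay (P : NetSys ι d τ Λ γ C) (v : EuclideanSpace ℝ (Fin d)) (α : ι) (a b K : ℝ)
    (h0 : 0 < a) (hab : a ≤ b)
    (hall : ∀ β ∈ P.S α, ∀ s, a ≤ s → s ≤ b → P.u v β (s - P.dly α β) ≤ K)
    (hu : ∀ s, a ≤ s → s ≤ b → P.u v α s ≤ K) :
    Real.exp (-Λ * (b - a)) * (K - P.u v α a) ≤ K - P.u v α b := by
  have hub := scalarGron (u := P.u v α)
      (uD := fun s => ∑ β ∈ P.S α, P.w α β s * (P.u v β (s - P.dly α β) - P.u v α s))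
      (Λ := Λ) (c := 0) (K := K) (P.hΛ) hab
      ((P.contu v α).continuousOn)
      (fun s hs => P.hasDerivAt_u v α s (lt_trans h0 hs.1))
      (fun s hs => P.deriv_ineq v α s K 0 0 le_rfl
        (fun β hβ => hall β hβ s hs.1.le hs.2.le) (hu s hs.1.le hs.2.le) (Or.inl rfl))
  simp only [zero_div] at hub
  linarith [hub]

/-- pull estimate: with a special source which is `δ`-below `K`. -/
lemma pull (P : NetSys ι d τ Λ γ C) (v : EuclideanSpace ℝ (Fin d)) (α σ : ι)
    (hσ : σ ∈ P.S α) (a b K δ : ℝ) (hδ : 0 ≤ δ) (h0 : 0 < a) (hab : a ≤ b)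
    (hall : ∀ β ∈ P.S α, ∀ s, a ≤ s → s ≤ b → P.u v β (s - P.dly α β) ≤ K)
    (hu : ∀ s, a ≤ s → s ≤ b → P.u v α s ≤ K)
    (hw : ∀ s, a < s → s < b → γ ≤ P.w α σ s)
    (hspec : ∀ s, a ≤ s → s ≤ b → P.u v σ (s - P.dly α σ) ≤ K - δ) :
    γ * δ / Λ + Real.exp (-Λ * (b - a)) * (K - P.u v α a - γ * δ / Λ) ≤ K - P.u v α b := by
  exact scalarGron (u := P.u v α)
      (uD := fun s => ∑ β ∈ P.S α, P.w α β s * (P.u v β (s - P.dly α β) - P.u v α s))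
      (Λ := Λ) (c := γ * δ) (K := K) (P.hΛ) hab
      ((P.contu v α).continuousOn)
      (fun s hs => P.hasDerivAt_u v α s (lt_trans h0 hs.1))
      (fun s hs => P.deriv_ineq v α s K δ (γ * δ) hδ
        (fun β hβ => hall β hβ s hs.1.le hs.2.le) (hu s hs.1.le hs.2.le)
        (Or.inr ⟨σ, hσ, rfl, hw s hs.1 hs.2, hspec s hs.1.le hs.2.le⟩))

/-- a cleaner corollary of `pull`. -/
lemma pull' (P : NetSys ι d τ Λ γ C) (v : EuclideanSpace ℝ (Fin d)) (α σ : ι)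
    (hσ : σ ∈ P.S α) (a b K δ : ℝ) (hδ : 0 ≤ δ) (h0 : 0 < a) (hab : a + τ ≤ b)
    (hall : ∀ β ∈ P.S α, ∀ s, a ≤ s → s ≤ b → P.u v β (s - P.dly α β) ≤ K)
    (hu : ∀ s, a ≤ s → s ≤ b → P.u v α s ≤ K)
    (hw : ∀ s, a < s → s < b → γ ≤ P.w α σ s)
    (hspec : ∀ s, a ≤ s → s ≤ b → P.u v σ (s - P.dly α σ) ≤ K - δ) :
    P.u v α b ≤ K - γ / Λ * (1 - Real.exp (-(Λ * τ))) * δ := by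
  have hτ := P.hτ
  have hab' : a ≤ b := by linarith
  have h := P.pull v α σ hσ a b K δ hδ h0 hab' hall hu hw hspec
  have hΛ := P.hΛ
  have he1 : Real.exp (-Λ * (b - a)) ≤ Real.exp (-(Λ * τ)) := by
    apply Real.exp_le_exp.2; nlinarith
  have he2 : (0:ℝ) < Real.exp (-Λ * (b - a)) := Real.exp_pos _
  have he3 : Real.exp (-(Λ * τ)) < 1 := by
    rw [Real.exp_lt_one_iff]; nlinarith
  have hγp := P.hγ
  have hq : 0 ≤ γ * δ / Λ := by positivity
  have hua : P.u v α a ≤ K := hu a le_rfl hab'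
  -- K - u b ≥ γδ/Λ + e (K - u a) - e γδ/Λ ≥ γδ/Λ (1 - e) ≥ γδ/Λ (1 - exp(-Λτ))
  have key : γ * δ / Λ * (1 - Real.exp (-(Λ * τ))) ≤ K - P.u v α b := by
    have h5 : γ * δ / Λ * (1 - Real.exp (-Λ * (b - a))) ≤ K - P.u v α b := by
      have := mul_le_mul_of_nonneg_left (sub_nonneg.2 hua) he2.le
      nlinarith
    have h6 : γ * δ / Λ * (1 - Real.exp (-(Λ * τ))) ≤ γ * δ / Λ * (1 - Real.exp (-Λ * (b - a))) := by
      apply mul_le_mul_of_nonneg_left _ hq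
      linarith
    linarith
  have : γ / Λ * (1 - Real.exp (-(Λ * τ))) * δ = γ * δ / Λ * (1 - Real.exp (-(Λ * τ))) := by ring
  linarith [key, this.le]

/-- contraction rate per pull. -/
def rho (τ Λ γ : ℝ) : ℝ := γ / Λ * (1 - Real.exp (-(Λ * τ)))

/-- overall contraction constant. -/
def cst (τ Λ γ : ℝ) : ℝ := (rho τ Λ γ)^3 * (Real.exp (-(Λ * (6*τ))) / 2)

lemma rho_pos (P : NetSys ι d τ Λ γ C) : 0 < rho τ Λ γ := by
  have h1 := P.hγ; have h2 := P.hΛ; have h3 := P.hτ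
  have h4 : Real.exp (-(Λ * τ)) < 1 := by rw [Real.exp_lt_one_iff]; nlinarith
  exact mul_pos (div_pos h1 h2) (by linarith)

lemma rho_le_one (P : NetSys ι d τ Λ γ C) : rho τ Λ γ ≤ 1 := by
  have h1 := P.hγ; have h2 := P.hΛ; have h4 := P.hγΛ
  have h5 : γ / Λ ≤ 1 := by rw [div_le_one h2]; exact h4
  have h6 : 0 < Real.exp (-(Λ * τ)) := Real.exp_pos _
  have h7 : 1 - Real.exp (-(Λ * τ)) ≤ 1 := by linarith
  rcases le_or_gt 0 (1 - Real.exp (-(Λ * τ))) with h8 | h8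
  · have h9 : γ / Λ * (1 - Real.exp (-(Λ * τ))) ≤ 1 * (1 - Real.exp (-(Λ * τ))) :=
      mul_le_mul_of_nonneg_right h5 h8
    unfold rho; linarith
  · have h9 : γ / Λ * (1 - Real.exp (-(Λ * τ))) ≤ 0 :=
      mul_nonpos_of_nonneg_of_nonpos (by positivity) h8.le
    unfold rho; linarith

lemma cst_pos (P : NetSys ι d τ Λ γ C) : 0 < cst τ Λ γ := by
  have := P.rho_pos; unfold cst; positivity

lemma cst_le_half (P : NetSys ι d τ Λ γ C) : cst τ Λ γ ≤ 1/2 := by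
  have h1 := P.rho_pos; have h2 := P.rho_le_one
  have h3 : (rho τ Λ γ)^3 ≤ 1 := pow_le_one₀ h1.le h2
  have h4 : Real.exp (-(Λ * (6*τ))) ≤ 1 := by
    rw [Real.exp_le_one_iff]
    have := P.hΛ; have := P.hτ; nlinarith
  have h5 : 0 < Real.exp (-(Λ * (6*τ))) := Real.exp_pos _
  have h6 : (rho τ Λ γ)^3 * (Real.exp (-(Λ * (6*τ))) / 2) ≤ 1 * (1/2) :=
    mul_le_mul h3 (by linarith) (by positivity) zero_le_one
  unfold cst; linarith

/-- the one-step contraction of the upper bound, when some agent starts low. -/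
lemma case1 (P : NetSys ι d τ Λ γ C) (v : EuclideanSpace ℝ (Fin d))
    (hC : ∀ α t, (0:ℝ) ≤ t → ‖P.z α t‖ ≤ C) (a m K : ℝ) (ha : τ ≤ a)
    (hbd : ∀ α t, a - τ ≤ t → m ≤ P.u v α t ∧ P.u v α t ≤ K)
    (α₀ : ι) (hα₀ : P.u v α₀ a ≤ (K + m) / 2) :
    ∀ α t, a + 4*τ ≤ t → t ≤ a + 6*τ → P.u v α t ≤ K - cst τ Λ γ * (K - m) := by
  have hτ := P.hτ
  have hΛ := P.hΛ
  have hγp := P.hγ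
  have hρ0 := P.rho_pos
  have hρ1 := P.rho_le_one
  set D := K - m with hD
  set ρ := rho τ Λ γ with hρ
  set ε₁ : ℝ := Real.exp (-(Λ * (6*τ))) / 2 with hε₁
  have hε₁0 : 0 < ε₁ := by positivity
  have hDpos : 0 ≤ D := by
    have := hbd α₀ a (by linarith)
    linarith [this.1, this.2]
  have ha0 : 0 < a := lt_of_lt_of_le hτ ha
  have hmul : ∀ X : ℝ, 0 ≤ X → ρ * X ≤ X := fun X hX => mul_le_of_le_one_left hX hρ1
  have hX1 : 0 ≤ ε₁ * D := mul_nonneg hε₁0.le hDpos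
  have hX2 : 0 ≤ ρ * ε₁ * D := by
    rw [mul_assoc]; exact mul_nonneg hρ0.le hX1
  have hX3 : 0 ≤ ρ * (ρ * ε₁ * D) := mul_nonneg hρ0.le hX2
  have hX4 : 0 ≤ ρ * (ρ * (ρ * ε₁ * D)) := mul_nonneg hρ0.le hX3
  -- upper bound hypothesis, restated
  have hup : ∀ α t, a - τ ≤ t → P.u v α t ≤ K := fun α t ht => (hbd α t ht).2
  -- all sources bounded by K
  have hall : ∀ (α' : ι) (a' : ℝ), a ≤ a' → ∀ β ∈ P.S α', ∀ s, a' ≤ s → s ≤ a + 6*τ →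
      P.u v β (s - P.dly α' β) ≤ K := by
    intro α' a' ha' β hβ s hs1 hs2
    apply hup
    rcases P.hdly0 α' β with h0 | h0 <;> rw [h0] <;> linarith
  -- Phase 0 : decay of the low agent α₀
  have phase0 : ∀ s, a ≤ s → s ≤ a + 6*τ → P.u v α₀ s ≤ K - ε₁ * D := by
    intro s hs1 hs2
    have hdec := P.decay v α₀ a s K ha0 hs1
      (fun β hβ s' h1 h2 => hall α₀ a le_rfl β hβ s' h1 (by linarith))
      (fun s' h1 h2 => hup α₀ s' (by linarith))
    have he1 : Real.exp (-(Λ * (6*τ))) ≤ Real.exp (-Λ * (s - a)) := by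
      apply Real.exp_le_exp.2; nlinarith
    have h2 : D / 2 ≤ K - P.u v α₀ a := by
      simp only [hD]; linarith
    have h3 : Real.exp (-(Λ * (6*τ))) * (D / 2) ≤ Real.exp (-Λ * (s - a)) * (K - P.u v α₀ a) := by
      apply mul_le_mul he1 h2 (by linarith) (Real.exp_pos _).le
    have h4 : ε₁ * D = Real.exp (-(Λ * (6*τ))) * (D / 2) := by rw [hε₁]; ring
    have h5 : ε₁ * D ≤ K - P.u v α₀ s := by rw [h4]; linarith
    linarith
  -- Phase 1 : all agents of the same population as α₀, on [a+τ, a+6τ]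
  have phase1 : ∀ β, P.pop β = P.pop α₀ → ∀ t, a + τ ≤ t → t ≤ a + 6*τ →
      P.u v β t ≤ K - ρ * ε₁ * D := by
    intro β hpop t ht1 ht2
    have hρε : ρ * ε₁ * D ≤ ε₁ * D := by
      rw [mul_assoc]; exact hmul _ hX1
    by_cases hβ : β = α₀
    · subst hβ
      have := phase0 t (by linarith) ht2
      linarith
    · obtain ⟨hmem, hd0⟩ := P.hsame β α₀ hpop hβ
      have hpl := P.pull' v β α₀ hmem a t K (ε₁ * D) (by positivity) ha0 ht1
        (fun β' hβ' s h1 h2 => hall β a le_rfl β' hβ' s h1 (by linarith))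
        (fun s h1 h2 => hup β s (by linarith))
        (fun s h1 h2 => by
          apply P.hwγ β α₀ s hmem (by linarith)
          · exact hC β s (by linarith)
          · rw [hd0, sub_zero]; exact hC α₀ s (by linarith))
        (fun s h1 h2 => by
          rw [hd0, sub_zero]; exact phase0 s h1 (by linarith))
      calc P.u v β t ≤ K - γ / Λ * (1 - Real.exp (-(Λ * τ))) * (ε₁ * D) := hpl
        _ = K - ρ * ε₁ * D := by rw [hρ]; unfold rho; ring_nf
  -- Phase 2 : leaders of the other population, on [a+3τ, a+6τ]
  have phase2 : ∀ β, P.pop β ≠ P.pop α₀ → P.lead β → ∀ t, a + 3*τ ≤ t → t ≤ a + 6*τ →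
      P.u v β t ≤ K - ρ * (ρ * ε₁ * D) := by
    intro β hpop hlead t ht1 ht2
    obtain ⟨α', hpop', hlead'⟩ := P.hex (P.pop α₀)
    have hne : P.pop β ≠ P.pop α' := by rw [hpop']; exact hpop
    obtain ⟨hmem, hdτ⟩ := P.hcross β α' hlead hlead' hne
    have hpl := P.pull' v β α' hmem (a + 2*τ) t K (ρ * ε₁ * D)
      hX2 (by linarith) (by linarith)
      (fun β' hβ' s h1 h2 => hall β (a + 2*τ) (by linarith) β' hβ' s h1 (by linarith))
      (fun s h1 h2 => hup β s (by linarith))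
      (fun s h1 h2 => by
        apply P.hwγ β α' s hmem (by linarith)
        · exact hC β s (by linarith)
        · rw [hdτ]; exact hC α' (s - τ) (by linarith))
      (fun s h1 h2 => by
        rw [hdτ]
        exact phase1 α' hpop' (s - τ) (by linarith) (by linarith))
    calc P.u v β t ≤ K - γ / Λ * (1 - Real.exp (-(Λ * τ))) * (ρ * ε₁ * D) := hpl
      _ = K - ρ * (ρ * ε₁ * D) := by rw [hρ]; unfold rho; ring_nf
  -- Phase 3 : all agents of the other population, on [a+4τ, a+6τ]
  have phase3 : ∀ β, P.pop β ≠ P.pop α₀ → ∀ t, a + 4*τ ≤ t → t ≤ a + 6*τ →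
      P.u v β t ≤ K - ρ * (ρ * (ρ * ε₁ * D)) := by
    intro β hpop t ht1 ht2
    have hmon : ρ * (ρ * (ρ * ε₁ * D)) ≤ ρ * (ρ * ε₁ * D) := hmul _ hX3
    obtain ⟨βs, hpopβs, hleadβs⟩ := P.hex (P.pop β)
    have hpopβs' : P.pop βs ≠ P.pop α₀ := by rw [hpopβs]; exact hpop
    by_cases hββs : β = βs
    · subst hββs
      have := phase2 β hpopβs' hleadβs t (by linarith) ht2
      linarith
    · obtain ⟨hmem, hd0⟩ := P.hsame β βs hpopβs.symm hββs
      have hpl := P.pull' v β βs hmem (a + 3*τ) t K (ρ * (ρ * ε₁ * D))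
        hX3 (by linarith) (by linarith)
        (fun β' hβ' s h1 h2 => hall β (a + 3*τ) (by linarith) β' hβ' s h1 (by linarith))
        (fun s h1 h2 => hup β s (by linarith))
        (fun s h1 h2 => by
          apply P.hwγ β βs s hmem (by linarith)
          · exact hC β s (by linarith)
          · rw [hd0, sub_zero]; exact hC βs s (by linarith))
        (fun s h1 h2 => by
          rw [hd0, sub_zero]
          exact phase2 βs hpopβs' hleadβs s h1 (by linarith))
      calc P.u v β t ≤ K - γ / Λ * (1 - Real.exp (-(Λ * τ))) * (ρ * (ρ * ε₁ * D)) := hpl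
        _ = K - ρ * (ρ * (ρ * ε₁ * D)) := by rw [hρ]; unfold rho; ring_nf
  -- conclusion
  intro α t ht1 ht2
  have hcd : cst τ Λ γ * D = ρ * (ρ * (ρ * ε₁ * D)) := by
    rw [hρ, hε₁]; unfold cst; ring
  by_cases hα : P.pop α = P.pop α₀
  · have := phase1 α hα t (by linarith) ht2
    have hmon : ρ * (ρ * (ρ * ε₁ * D)) ≤ ρ * ε₁ * D :=
      le_trans (hmul _ hX3) (hmul _ hX2)
    rw [hcd]; linarith
  · have := phase3 α hα t ht1 ht2
    rw [hcd]; linarith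

lemma u_neg (P : NetSys ι d τ Λ γ C) (v : EuclideanSpace ℝ (Fin d)) (α : ι) (t : ℝ) :
    P.u (-v) α t = -P.u v α t := by
  simp [u, inner_neg_left]

/-- one-step contraction of the interval of projections. -/
lemma step (P : NetSys ι d τ Λ γ C) [Nonempty ι] (v : EuclideanSpace ℝ (Fin d))
    (hC : ∀ α t, (0:ℝ) ≤ t → ‖P.z α t‖ ≤ C) (a m K : ℝ) (ha : τ ≤ a)
    (hbd : ∀ α t, a - τ ≤ t → m ≤ P.u v α t ∧ P.u v α t ≤ K) :
    ∃ m' K', m ≤ m' ∧ K' ≤ K ∧ K' - m' ≤ (1 - cst τ Λ γ) * (K - m) ∧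
      ∀ α t, a + 5*τ ≤ t → m' ≤ P.u v α t ∧ P.u v α t ≤ K' := by
  have hτ := P.hτ
  have hc0 := P.cst_pos
  set c := cst τ Λ γ with hc
  have hD0 : 0 ≤ K - m := by
    obtain ⟨α⟩ := ‹Nonempty ι›
    have := hbd α a (by linarith)
    linarith [this.1, this.2]
  by_cases hcase : ∃ α₀, P.u v α₀ a ≤ (K + m) / 2
  · obtain ⟨α₀, hα₀⟩ := hcase
    have h1 := P.case1 v hC a m K ha hbd α₀ hα₀
    have h2 : ∀ α t, a + 6*τ ≤ t → P.u v α t ≤ K - c * (K - m) := by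
      apply P.invariance v (K - c * (K - m)) (a + 6*τ) (by linarith)
      · intro α; exact h1 α (a + 6*τ) (by linarith) le_rfl
      · intro β _ s hs1 hs2; exact h1 β s (by linarith) (by linarith)
    refine ⟨m, K - c * (K - m), le_rfl, by nlinarith, by ring_nf; rfl, ?_⟩
    intro α t ht
    refine ⟨(hbd α t (by linarith)).1, ?_⟩
    rcases le_or_gt t (a + 6*τ) with h | h
    · exact h1 α t (by linarith) h
    · exact h2 α t h.le
  · push_neg at hcase
    obtain ⟨α₀⟩ := ‹Nonempty ι›
    have hbd' : ∀ α t, a - τ ≤ t → -K ≤ P.u (-v) α t ∧ P.u (-v) α t ≤ -m := by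
      intro α t ht
      rw [P.u_neg]
      have := hbd α t ht
      exact ⟨by linarith [this.2], by linarith [this.1]⟩
    have hα₀ : P.u (-v) α₀ a ≤ (-m + -K) / 2 := by
      rw [P.u_neg]
      have := hcase α₀
      linarith
    have h1 := P.case1 (-v) hC a (-K) (-m) ha hbd' α₀ hα₀
    have h2 : ∀ α t, a + 6*τ ≤ t → P.u (-v) α t ≤ -m - c * (-m - -K) := by
      apply P.invariance (-v) (-m - c * (-m - -K)) (a + 6*τ) (by linarith)
      · intro α; exact h1 α (a + 6*τ) (by linarith) le_rfl
      · intro β _ s hs1 hs2; exact h1 β s (by linarith) (by linarith)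
    refine ⟨m + c * (K - m), K, by nlinarith, le_rfl, by ring_nf; rfl, ?_⟩
    intro α t ht
    refine ⟨?_, (hbd α t (by linarith)).2⟩
    rcases le_or_gt t (a + 6*τ) with h | h
    · have := h1 α t (by linarith) h
      rw [P.u_neg] at this
      have he : -m - c * (-m - -K) = -(m + c * (K - m)) := by ring
      rw [he] at this
      linarith
    · have := h2 α t h.le
      rw [P.u_neg] at this
      have he : -m - c * (-m - -K) = -(m + c * (K - m)) := by ring
      rw [he] at this
      linarith

/-- iterated contraction. -/
lemma iterate (P : NetSys ι d τ Λ γ C) [Nonempty ι] (v : EuclideanSpace ℝ (Fin d))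
    (hC : ∀ α t, (0:ℝ) ≤ t → ‖P.z α t‖ ≤ C) (m0 K0 : ℝ)
    (hbd0 : ∀ α t, (0:ℝ) ≤ t → m0 ≤ P.u v α t ∧ P.u v α t ≤ K0) :
    ∀ n : ℕ, ∃ m K, K - m ≤ (1 - cst τ Λ γ)^n * (K0 - m0) ∧
      ∀ α t, 6*(n:ℝ)*τ ≤ t → m ≤ P.u v α t ∧ P.u v α t ≤ K := by
  have hτ := P.hτ
  have hc0 := P.cst_pos
  have hc2 := P.cst_le_half
  intro n
  induction n with
  | zero =>
    exact ⟨m0, K0, by simp, fun α t ht => hbd0 α t (by push_cast at ht ⊢; linarith)⟩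
  | succ n ih =>
    obtain ⟨m, K, hK, hbd⟩ := ih
    obtain ⟨m', K', hm', hK', hcontr, hbd'⟩ :=
      P.step v hC (6*(n:ℝ)*τ + τ) m K (by nlinarith [Nat.cast_nonneg (α := ℝ) n]) 
        (fun α t ht => hbd α t (by linarith))
    refine ⟨m', K', ?_, fun α t ht => hbd' α t (by push_cast at ht ⊢; linarith)⟩
    have h1 : (0:ℝ) ≤ 1 - cst τ Λ γ := by linarith
    calc K' - m' ≤ (1 - cst τ Λ γ) * (K - m) := hcontr
      _ ≤ (1 - cst τ Λ γ) * ((1 - cst τ Λ γ)^n * (K0 - m0)) :=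
          mul_le_mul_of_nonneg_left hK h1
      _ = (1 - cst τ Λ γ)^(n+1) * (K0 - m0) := by ring

/-- coordinate bounds propagate. -/
lemma coordBound (P : NetSys ι d τ Λ γ C) (B : ℝ)
    (hinit : ∀ α, ∀ s ∈ Icc (-τ) (0:ℝ), ‖P.z α s‖ ≤ B) :
    ∀ (l : Fin d) α t, (0:ℝ) ≤ t →
      |P.u (EuclideanSpace.single l (1:ℝ)) α t| ≤ B := by
  have hτ := P.hτ
  intro l
  set v : EuclideanSpace ℝ (Fin d) := EuclideanSpace.single l (1:ℝ) with hv
  have hnv : ‖v‖ = 1 := by rw [hv, EuclideanSpace.norm_single]; norm_num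
  have habs : ∀ (w : EuclideanSpace ℝ (Fin d)) α t, |P.u w α t| ≤ ‖w‖ * ‖P.z α t‖ := by
    intro w α t
    exact abs_real_inner_le_norm w (P.z α t)
  have h0 : ∀ α s, s ∈ Icc (-τ) (0:ℝ) → |P.u v α s| ≤ B := by
    intro α s hs
    calc |P.u v α s| ≤ ‖v‖ * ‖P.z α s‖ := habs v α s
      _ = ‖P.z α s‖ := by rw [hnv, one_mul]
      _ ≤ B := hinit α s hs
  have hup : ∀ α t, (0:ℝ) ≤ t → P.u v α t ≤ B := by
    apply P.invariance v B 0 le_rfl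
    · intro α
      have := h0 α 0 ⟨by linarith, le_rfl⟩
      exact (abs_le.1 this).2
    · intro β _ s hs1 hs2
      have := h0 β s ⟨by linarith, hs2⟩
      exact (abs_le.1 this).2
  have hlo : ∀ α t, (0:ℝ) ≤ t → P.u (-v) α t ≤ B := by
    apply P.invariance (-v) B 0 le_rfl
    · intro α
      rw [P.u_neg]
      have := h0 α 0 ⟨by linarith, le_rfl⟩
      linarith [(abs_le.1 this).1]
    · intro β _ s hs1 hs2
      rw [P.u_neg]
      have := h0 β s ⟨by linarith, hs2⟩
      linarith [(abs_le.1 this).1]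
  intro α t ht
  rw [abs_le]
  refine ⟨?_, hup α t ht⟩
  have := hlo α t ht
  rw [P.u_neg] at this
  linarith

lemma u_single (P : NetSys ι d τ Λ γ C) (l : Fin d) (α : ι) (t : ℝ) :
    P.u (EuclideanSpace.single l (1:ℝ)) α t = P.z α t l := by
  simp [u, EuclideanSpace.inner_single_left]

/-- norm bounds propagate. -/
lemma normBound (P : NetSys ι d τ Λ γ C) (B : ℝ) (hB0 : 0 ≤ B)
    (hinit : ∀ α, ∀ s ∈ Icc (-τ) (0:ℝ), ‖P.z α s‖ ≤ B)
    (hC : C = Real.sqrt d * B) :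
    ∀ α t, (0:ℝ) ≤ t → ‖P.z α t‖ ≤ C := by
  intro α t ht
  have h1 : ∀ l : Fin d, |P.z α t l| ≤ B := by
    intro l
    have := P.coordBound B hinit l α t ht
    rwa [P.u_single] at this
  rw [EuclideanSpace.norm_eq]
  have h2 : ∑ l : Fin d, ‖P.z α t l‖^2 ≤ ∑ _l : Fin d, B^2 := by
    apply Finset.sum_le_sum
    intro l _
    rw [Real.norm_eq_abs]
    have := h1 l
    nlinarith [abs_nonneg (P.z α t l)]
  have key : Real.sqrt (∑ l : Fin d, ‖P.z α t l‖^2) ≤ Real.sqrt d * B := by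
    calc Real.sqrt (∑ l : Fin d, ‖P.z α t l‖^2) ≤ Real.sqrt (∑ _l : Fin d, B^2) :=
          Real.sqrt_le_sqrt h2
      _ = Real.sqrt ((d : ℝ) * B^2) := by rw [Finset.sum_const, Finset.card_univ,
          Fintype.card_fin, nsmul_eq_mul]
      _ = Real.sqrt d * B := by
          rw [Real.sqrt_mul (Nat.cast_nonneg d), Real.sqrt_sq hB0]
  linarith [key, hC.le]

end NetSys

lemma le_div_of_gamma {γ den R f : ℝ} (hγ : 0 < γ) (hden : 0 < den) (hdenR : den ≤ R)
    (hf : γ * R ≤ f) : γ ≤ f / den := by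
  have hR : 0 < R := lt_of_lt_of_le hden hdenR
  rw [le_div_iff₀ hden]
  calc γ * den ≤ γ * R := by nlinarith
    _ ≤ f := hf
lemma euclid_norm_le {d : ℕ} (ξ : EuclideanSpace ℝ (Fin d)) (δ : ℝ) (hδ : 0 ≤ δ)
    (hl : ∀ l : Fin d, |ξ l| ≤ δ) : ‖ξ‖ ≤ Real.sqrt d * δ := by
  rw [EuclideanSpace.norm_eq]
  have h2 : ∑ l : Fin d, ‖ξ l‖^2 ≤ ∑ _l : Fin d, δ^2 := by
    apply Finset.sum_le_sum
    intro l _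
    rw [Real.norm_eq_abs]
    have := hl l
    nlinarith [abs_nonneg (ξ l)]
  calc Real.sqrt (∑ l : Fin d, ‖ξ l‖^2) ≤ Real.sqrt (∑ _l : Fin d, δ^2) :=
        Real.sqrt_le_sqrt h2
    _ = Real.sqrt ((d : ℝ) * δ^2) := by rw [Finset.sum_const, Finset.card_univ,
        Fintype.card_fin, nsmul_eq_mul]
    _ = Real.sqrt d * δ := by
        rw [Real.sqrt_mul (Nat.cast_nonneg d), Real.sqrt_sq hδ]
section Build

variable {d N M h k : ℕ} {τ Λ γ C : ℝ}
variable {ψ ψs φ φs : EuclideanSpace ℝ (Fin d) → EuclideanSpace ℝ (Fin d) → ℝ}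
variable {x : Fin N → ℝ → EuclideanSpace ℝ (Fin d)} {y : Fin M → ℝ → EuclideanSpace ℝ (Fin d)}

/-- construction of the abstract network from a solution. -/
theorem buildNet (hN : 2 ≤ N) (hM2 : 2 ≤ M) (hMN : M ≤ N)
    (hh1 : 1 ≤ h) (hhM : h < M) (hk1 : 1 ≤ k) (hkN : k < N)
    (hτ : 0 < τ) (hγ : 0 < γ) (hγΛ : γ ≤ Λ)
    (hψp : ∀ z₁ z₂, 0 < ψ z₁ z₂) (hψsp : ∀ z₁ z₂, 0 < ψs z₁ z₂)
    (hφp : ∀ z₁ z₂, 0 < φ z₁ z₂) (hφsp : ∀ z₁ z₂, 0 < φs z₁ z₂)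
    (hψΛ : ∀ z₁ z₂, ψ z₁ z₂ ≤ Λ) (hψsΛ : ∀ z₁ z₂, ψs z₁ z₂ ≤ Λ)
    (hφΛ : ∀ z₁ z₂, φ z₁ z₂ ≤ Λ) (hφsΛ : ∀ z₁ z₂, φs z₁ z₂ ≤ Λ)
    (hψγ : ∀ z₁ z₂, ‖z₁‖ ≤ C → ‖z₂‖ ≤ C → γ * ((N:ℝ) + M) ≤ ψ z₁ z₂)
    (hψsγ : ∀ z₁ z₂, ‖z₁‖ ≤ C → ‖z₂‖ ≤ C → γ * ((N:ℝ) + M) ≤ ψs z₁ z₂)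
    (hφγ : ∀ z₁ z₂, ‖z₁‖ ≤ C → ‖z₂‖ ≤ C → γ * ((N:ℝ) + M) ≤ φ z₁ z₂)
    (hφsγ : ∀ z₁ z₂, ‖z₁‖ ≤ C → ‖z₂‖ ≤ C → γ * ((N:ℝ) + M) ≤ φs z₁ z₂)
    (hsol : IsSol h k τ ψ ψs φ φs x y) :
    ∃ P : NetSys (Fin N ⊕ Fin M) d τ Λ γ C, P.z = Sum.elim x y := by
  classical
  have hΛpos : 0 < Λ := lt_of_lt_of_le hγ hγΛ
  -- denominators
  set den : Fin N ⊕ Fin M → ℝ := fun α =>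
    Sum.elim (fun i : Fin N => if (i:ℕ) < k then (N:ℝ) + h - 1 else (N:ℝ) - 1)
             (fun j : Fin M => if (j:ℕ) < h then (M:ℝ) + k - 1 else (M:ℝ) - 1) α with hden
  have hden1 : ∀ α, 1 ≤ den α := by
    rintro (i | j) <;> simp only [hden, Sum.elim_inl, Sum.elim_inr] <;> split <;>
    · have h1 : (2:ℝ) ≤ N := by exact_mod_cast hN
      have h2 : (2:ℝ) ≤ M := by exact_mod_cast hM2
      have h3 : (0:ℝ) ≤ h := Nat.cast_nonneg h
      have h4 : (0:ℝ) ≤ k := Nat.cast_nonneg k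
      linarith
  have hdenpos : ∀ α, 0 < den α := fun α => lt_of_lt_of_le one_pos (hden1 α)
  have hdenNM : ∀ α, den α ≤ (N:ℝ) + M := by
    rintro (i | j) <;> simp only [hden, Sum.elim_inl, Sum.elim_inr] <;> split <;>
    · have h1 : (0:ℝ) ≤ N := Nat.cast_nonneg N
      have h2 : (0:ℝ) ≤ M := Nat.cast_nonneg M
      have h3 : (h:ℝ) ≤ M := by exact_mod_cast hhM.le
      have h4 : (k:ℝ) ≤ N := by exact_mod_cast hkN.le
      linarith
  -- sources
  set Sf : Fin N ⊕ Fin M → Finset (Fin N ⊕ Fin M) := fun α =>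
    Sum.elim
      (fun i : Fin N => ((Finset.univ.erase i).image Sum.inl) ∪
        (if (i:ℕ) < k then (Finset.univ.filter fun j : Fin M => (j:ℕ) < h).image Sum.inr else ∅))
      (fun j : Fin M => ((Finset.univ.erase j).image Sum.inr) ∪
        (if (j:ℕ) < h then (Finset.univ.filter fun i : Fin N => (i:ℕ) < k).image Sum.inl else ∅)) α
    with hSf
  set dlyf : Fin N ⊕ Fin M → Fin N ⊕ Fin M → ℝ := fun α β =>
    Sum.elim (fun _ : Fin N => Sum.elim (fun _ : Fin N => (0:ℝ)) (fun _ : Fin M => τ) β)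
             (fun _ : Fin M => Sum.elim (fun _ : Fin N => τ) (fun _ : Fin M => (0:ℝ)) β) α
    with hdlyf
  set wf : Fin N ⊕ Fin M → Fin N ⊕ Fin M → ℝ → ℝ := fun α β t =>
    Sum.elim
      (fun i : Fin N => Sum.elim
        (fun j : Fin N => ψ (x i t) (x j t) / den (Sum.inl i))
        (fun j : Fin M => φ (x i t) (y j (t - τ)) / den (Sum.inl i)) β)
      (fun i : Fin M => Sum.elim
        (fun j : Fin N => φs (y i t) (x j (t - τ)) / den (Sum.inr i))
        (fun j : Fin M => ψs (y i t) (y j t) / den (Sum.inr i)) β) α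
    with hwf
  have hinj_inl : ∀ s : Finset (Fin N), ∀ a ∈ s, ∀ b ∈ s, Sum.inl (β := Fin M) a = Sum.inl b → a = b :=
    fun _ _ _ _ _ hab => Sum.inl.inj hab
  have hinj_inr : ∀ s : Finset (Fin M), ∀ a ∈ s, ∀ b ∈ s, Sum.inr (α := Fin N) a = Sum.inr b → a = b :=
    fun _ _ _ _ _ hab => Sum.inr.inj hab
  refine ⟨{ z := Sum.elim x y, S := Sf, dly := dlyf, w := wf,
            pop := Sum.elim (fun _ => true) (fun _ => false),
            lead := Sum.elim (fun i => (i:ℕ) < k) (fun j => (j:ℕ) < h),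
            cont := ?_, hτ := hτ, hγ := hγ, hγΛ := hγΛ, hdly0 := ?_, hw0 := ?_,
            hwsum := ?_, hode := ?_, hlead := ?_, hsame := ?_, hcross := ?_,
            hex := ?_, hwγ := ?_ }, rfl⟩
  · rintro (i | j)
    · exact hsol.contx i
    · exact hsol.conty j
  · rintro (i | j) (i' | j') <;> simp [hdlyf]
  · rintro (i | j) (i' | j') t <;>
      simp only [hwf, Sum.elim_inl, Sum.elim_inr]
    · exact div_nonneg (hψp _ _).le (hdenpos _).le
    · exact div_nonneg (hφp _ _).le (hdenpos _).le
    · exact div_nonneg (hφsp _ _).le (hdenpos _).le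
    · exact div_nonneg (hψsp _ _).le (hdenpos _).le
  · -- hwsum
    have hfiltM : ((Finset.univ.filter fun j : Fin M => (j:ℕ) < h).card ≤ h) := by
      calc ((Finset.univ.filter fun j : Fin M => (j:ℕ) < h).card)
          ≤ (Finset.range h).card := by
            refine Finset.card_le_card_of_injOn (fun j => (j : ℕ)) ?_ ?_
            · intro a ha
              rw [Finset.mem_coe, Finset.mem_filter] at ha
              exact Finset.mem_range.2 ha.2
            · intro a _ b _ hab
              exact Fin.val_injective hab
        _ = h := Finset.card_range h
    have hfiltN : ((Finset.univ.filter fun i : Fin N => (i:ℕ) < k).card ≤ k) := by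
      calc ((Finset.univ.filter fun i : Fin N => (i:ℕ) < k).card)
          ≤ (Finset.range k).card := by
            refine Finset.card_le_card_of_injOn (fun j => (j : ℕ)) ?_ ?_
            · intro a ha
              rw [Finset.mem_coe, Finset.mem_filter] at ha
              exact Finset.mem_range.2 ha.2
            · intro a _ b _ hab
              exact Fin.val_injective hab
        _ = k := Finset.card_range k
    have main : ∀ (α : Fin N ⊕ Fin M) (t : ℝ) (c1 c2 : ℕ),
        (∀ β ∈ Sf α, wf α β t ≤ Λ / den α) → (Sf α).card ≤ c1 + c2 →
        ((c1:ℝ) + c2 ≤ den α) → ∑ β ∈ Sf α, wf α β t ≤ Λ := by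
      intro α t c1 c2 hbd hcard hcast
      have hq0 : 0 ≤ Λ / den α := div_nonneg hΛpos.le (hdenpos α).le
      calc ∑ β ∈ Sf α, wf α β t ≤ (Sf α).card • (Λ / den α) :=
            Finset.sum_le_card_nsmul _ _ _ hbd
        _ = ((Sf α).card : ℝ) * (Λ / den α) := nsmul_eq_mul _ _
        _ ≤ ((c1:ℝ) + c2) * (Λ / den α) := by
            apply mul_le_mul_of_nonneg_right _ hq0
            have : ((Sf α).card : ℝ) ≤ ((c1 + c2 : ℕ) : ℝ) := by exact_mod_cast hcard
            push_cast at this; linarith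
        _ ≤ den α * (Λ / den α) := mul_le_mul_of_nonneg_right hcast hq0
        _ = Λ := by
            rw [mul_comm]
            exact div_mul_cancel₀ Λ (ne_of_gt (hdenpos α))
    rintro (i | j) t
    · refine main (Sum.inl i) t (N - 1) (if (i:ℕ) < k then h else 0) ?_ ?_ ?_
      · rintro (i' | j') hmem <;> simp only [hwf, Sum.elim_inl, Sum.elim_inr]
        · exact (div_le_div_iff_of_pos_right (hdenpos _)).2 (hψΛ _ _)
        · exact (div_le_div_iff_of_pos_right (hdenpos _)).2 (hφΛ _ _)
      · simp only [hSf, Sum.elim_inl]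
        calc (((Finset.univ.erase i).image Sum.inl) ∪
              (if (i:ℕ) < k then (Finset.univ.filter fun j : Fin M => (j:ℕ) < h).image Sum.inr else ∅)).card
            ≤ (((Finset.univ.erase i).image Sum.inl)).card +
              ((if (i:ℕ) < k then (Finset.univ.filter fun j : Fin M => (j:ℕ) < h).image Sum.inr else ∅)).card :=
              Finset.card_union_le _ _
          _ ≤ (N - 1) + (if (i:ℕ) < k then h else 0) := by
              apply Nat.add_le_add
              · rw [Finset.card_image_of_injective _ Sum.inl_injective,
                  Finset.card_erase_of_mem (Finset.mem_univ i), Finset.card_univ, Fintype.card_fin]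
              · split
                · rw [Finset.card_image_of_injective _ Sum.inr_injective]
                  exact hfiltM
                · simp
      · simp only [hden, Sum.elim_inl]
        have h1 : (1:ℝ) ≤ N := by exact_mod_cast (by omega : 1 ≤ N)
        have h2 : ((N - 1 : ℕ) : ℝ) = (N:ℝ) - 1 := by
          push_cast [Nat.cast_sub (by omega : 1 ≤ N)]; ring
        split
        · rw [h2]; push_cast; ring_nf; rfl
        · rw [h2]; push_cast; norm_num
    · refine main (Sum.inr j) t (M - 1) (if (j:ℕ) < h then k else 0) ?_ ?_ ?_
      · rintro (i' | j') hmem <;> simp only [hwf, Sum.elim_inl, Sum.elim_inr]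
        · exact (div_le_div_iff_of_pos_right (hdenpos _)).2 (hφsΛ _ _)
        · exact (div_le_div_iff_of_pos_right (hdenpos _)).2 (hψsΛ _ _)
      · simp only [hSf, Sum.elim_inr]
        calc (((Finset.univ.erase j).image Sum.inr) ∪
              (if (j:ℕ) < h then (Finset.univ.filter fun i : Fin N => (i:ℕ) < k).image Sum.inl else ∅)).card
            ≤ (((Finset.univ.erase j).image Sum.inr)).card +
              ((if (j:ℕ) < h then (Finset.univ.filter fun i : Fin N => (i:ℕ) < k).image Sum.inl else ∅)).card :=
              Finset.card_union_le _ _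
          _ ≤ (M - 1) + (if (j:ℕ) < h then k else 0) := by
              apply Nat.add_le_add
              · rw [Finset.card_image_of_injective _ Sum.inr_injective,
                  Finset.card_erase_of_mem (Finset.mem_univ j), Finset.card_univ, Fintype.card_fin]
              · split
                · rw [Finset.card_image_of_injective _ Sum.inl_injective]
                  exact hfiltN
                · simp
      · simp only [hden, Sum.elim_inr]
        have h2 : ((M - 1 : ℕ) : ℝ) = (M:ℝ) - 1 := by
          push_cast [Nat.cast_sub (by omega : 1 ≤ M)]; ring
        split
        · rw [h2]; push_cast; ring_nf; rfl
        · rw [h2]; push_cast; norm_num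
  · -- hode
    rintro (i | j) t ht
    · by_cases hik : (i:ℕ) < k
      · have hder := hsol.odex_lead i hik t ht
        have hdisj : Disjoint ((Finset.univ.erase i).image (Sum.inl (β := Fin M)))
            ((Finset.univ.filter fun j : Fin M => (j:ℕ) < h).image Sum.inr) := by
          simp [Finset.disjoint_left]
        simp only [hSf, hwf, hdlyf, hden, Sum.elim_inl, Sum.elim_inr, if_pos hik]
        rw [Finset.sum_union hdisj, Finset.sum_image (hinj_inl _), Finset.sum_image (hinj_inr _)]
        simp only [Sum.elim_inl, Sum.elim_inr, sub_zero]
        exact hder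
      · have hder := hsol.odex_foll i (le_of_not_gt hik) t ht
        simp only [hSf, hwf, hdlyf, hden, Sum.elim_inl, Sum.elim_inr, if_neg hik,
          Finset.union_empty]
        rw [Finset.sum_image (hinj_inl _)]
        simp only [Sum.elim_inl, sub_zero]
        exact hder
    · by_cases hjh : (j:ℕ) < h
      · have hder := hsol.odey_lead j hjh t ht
        have hdisj : Disjoint ((Finset.univ.erase j).image (Sum.inr (α := Fin N)))
            ((Finset.univ.filter fun i : Fin N => (i:ℕ) < k).image Sum.inl) := by
          simp [Finset.disjoint_left]
        simp only [hSf, hwf, hdlyf, hden, Sum.elim_inl, Sum.elim_inr, if_pos hjh]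
        rw [Finset.sum_union hdisj, Finset.sum_image (hinj_inr _), Finset.sum_image (hinj_inl _)]
        simp only [Sum.elim_inl, Sum.elim_inr, sub_zero]
        exact hder
      · have hder := hsol.odey_foll j (le_of_not_gt hjh) t ht
        simp only [hSf, hwf, hdlyf, hden, Sum.elim_inl, Sum.elim_inr, if_neg hjh,
          Finset.union_empty]
        rw [Finset.sum_image (hinj_inr _)]
        simp only [Sum.elim_inr, sub_zero]
        exact hder
  · -- hlead
    rintro (i | j) (i' | j') hmem hne <;>
      simp only [hdlyf, Sum.elim_inl, Sum.elim_inr] at hne ⊢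
    · exact absurd rfl hne
    · -- j' must be in the filter part
      simp only [hSf, Sum.elim_inl, Finset.mem_union, Finset.mem_image] at hmem
      rcases hmem with ⟨a, _, hc⟩ | hmem
      · exact absurd hc (by simp)
      · rcases Decidable.em ((i:ℕ) < k) with hik | hik
        · rw [if_pos hik] at hmem
          simp only [Finset.mem_image, Finset.mem_filter] at hmem
          obtain ⟨a, ⟨_, ha⟩, hc⟩ := hmem
          rw [← Sum.inr.inj hc]; exact ha
        · rw [if_neg hik] at hmem; exact absurd hmem (Finset.notMem_empty _)
    · simp only [hSf, Sum.elim_inr, Finset.mem_union, Finset.mem_image] at hmem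
      rcases hmem with ⟨a, _, hc⟩ | hmem
      · exact absurd hc (by simp)
      · rcases Decidable.em ((j:ℕ) < h) with hjh | hjh
        · rw [if_pos hjh] at hmem
          simp only [Finset.mem_image, Finset.mem_filter] at hmem
          obtain ⟨a, ⟨_, ha⟩, hc⟩ := hmem
          rw [← Sum.inl.inj hc]; exact ha
        · rw [if_neg hjh] at hmem; exact absurd hmem (Finset.notMem_empty _)
    · exact absurd rfl hne
  · -- hsame
    rintro (i | j) (i' | j') hpop hne <;>
      simp only [Sum.elim_inl, Sum.elim_inr] at hpop
    · refine ⟨?_, by simp [hdlyf]⟩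
      simp only [hSf, Sum.elim_inl]
      apply Finset.mem_union_left
      exact Finset.mem_image_of_mem _ (Finset.mem_erase.2 ⟨fun hc => hne (by rw [hc]), Finset.mem_univ _⟩)
    · exact absurd hpop (by simp)
    · exact absurd hpop (by simp)
    · refine ⟨?_, by simp [hdlyf]⟩
      simp only [hSf, Sum.elim_inr]
      apply Finset.mem_union_left
      exact Finset.mem_image_of_mem _ (Finset.mem_erase.2 ⟨fun hc => hne (by rw [hc]), Finset.mem_univ _⟩)
  · -- hcross
    rintro (i | j) (i' | j') hl1 hl2 hpop <;>
      simp only [Sum.elim_inl, Sum.elim_inr] at hl1 hl2 hpop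
    · exact absurd rfl hpop
    · refine ⟨?_, by simp [hdlyf]⟩
      simp only [hSf, Sum.elim_inl]
      apply Finset.mem_union_right
      rw [if_pos hl1]
      exact Finset.mem_image_of_mem _ (Finset.mem_filter.2 ⟨Finset.mem_univ _, hl2⟩)
    · refine ⟨?_, by simp [hdlyf]⟩
      simp only [hSf, Sum.elim_inr]
      apply Finset.mem_union_right
      rw [if_pos hl1]
      exact Finset.mem_image_of_mem _ (Finset.mem_filter.2 ⟨Finset.mem_univ _, hl2⟩)
    · exact absurd rfl hpop
  · -- hex
    intro b
    cases b
    · exact ⟨Sum.inr ⟨0, by omega⟩, rfl, by simpa using Nat.lt_of_lt_of_le Nat.zero_lt_one hh1⟩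
    · exact ⟨Sum.inl ⟨0, by omega⟩, rfl, by simpa using Nat.lt_of_lt_of_le Nat.zero_lt_one hk1⟩
  · -- hwγ
    rintro (i | j) (i' | j') t hmem ht hn1 hn2 <;>
      simp only [hwf, hdlyf, Sum.elim_inl, Sum.elim_inr, sub_zero] at hn1 hn2 ⊢
    · exact le_div_of_gamma hγ (hdenpos _) (hdenNM _) (hψγ _ _ hn1 hn2)
    · exact le_div_of_gamma hγ (hdenpos _) (hdenNM _) (hφγ _ _ hn1 hn2)
    · exact le_div_of_gamma hγ (hdenpos _) (hdenNM _) (hφsγ _ _ hn1 hn2)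
    · exact le_div_of_gamma hγ (hdenpos _) (hdenNM _) (hψsγ _ _ hn1 hn2)

end Build

theorem stmt16
    (d N M h k : ℕ) (hd : 1 ≤ d) (hN : 2 ≤ N) (hM2 : 2 ≤ M) (hMN : M ≤ N)
    (hh1 : 1 ≤ h) (hhM : h < M) (hk1 : 1 ≤ k) (hkN : k < N)
    (τ : ℝ) (hτ : 0 < τ)
    (ψ ψs φ φs : EuclideanSpace ℝ (Fin d) → EuclideanSpace ℝ (Fin d) → ℝ)
    (hψ : Admissible ψ) (hψs : Admissible ψs) (hφ : Admissible φ) (hφs : Admissible φs)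
    (x : Fin N → ℝ → EuclideanSpace ℝ (Fin d)) (y : Fin M → ℝ → EuclideanSpace ℝ (Fin d))
    (hsol : IsSol h k τ ψ ψs φ φs x y)
    :
    Tendsto (fun t : ℝ =>
      max (max (⨆ p : Fin N × Fin N, ‖x p.1 t - x p.2 t‖)
               (⨆ p : Fin M × Fin M, ‖y p.1 t - y p.2 t‖))
          (⨆ p : Fin N × Fin M, ‖x p.1 t - y p.2 t‖)) atTop (nhds 0) := by
  classical
  obtain ⟨hψc, hψp, hψb⟩ := hψ
  obtain ⟨hψsc, hψsp, hψsb⟩ := hψs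
  obtain ⟨hφc, hφp, hφb⟩ := hφ
  obtain ⟨hφsc, hφsp, hφsb⟩ := hφs
  -- the uniform upper bound Λ
  obtain ⟨Uψ, hUψ⟩ := hψb
  obtain ⟨Uψs, hUψs⟩ := hψsb
  obtain ⟨Uφ, hUφ⟩ := hφb
  obtain ⟨Uφs, hUφs⟩ := hφsb
  set Λ : ℝ := max 1 (max (max Uψ Uψs) (max Uφ Uφs)) with hΛdef
  have hψΛ : ∀ z₁ z₂, ψ z₁ z₂ ≤ Λ := fun z₁ z₂ =>
    le_trans (hUψ (Set.mem_range_self ((z₁, z₂) : _ × _)))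
      (le_trans (le_max_left _ _) (le_trans (le_max_left _ _) (le_max_right _ _)))
  have hψsΛ : ∀ z₁ z₂, ψs z₁ z₂ ≤ Λ := fun z₁ z₂ =>
    le_trans (hUψs (Set.mem_range_self ((z₁, z₂) : _ × _)))
      (le_trans (le_max_right _ _) (le_trans (le_max_left _ _) (le_max_right _ _)))
  have hφΛ : ∀ z₁ z₂, φ z₁ z₂ ≤ Λ := fun z₁ z₂ =>
    le_trans (hUφ (Set.mem_range_self ((z₁, z₂) : _ × _)))
      (le_trans (le_max_left _ _) (le_trans (le_max_right _ _) (le_max_right _ _)))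
  have hφsΛ : ∀ z₁ z₂, φs z₁ z₂ ≤ Λ := fun z₁ z₂ =>
    le_trans (hUφs (Set.mem_range_self ((z₁, z₂) : _ × _)))
      (le_trans (le_max_right _ _) (le_trans (le_max_right _ _) (le_max_right _ _)))
  -- the initial bound B
  have hBex : ∀ α : Fin N ⊕ Fin M, ∃ Bα : ℝ, ∀ s ∈ Icc (-τ) (0:ℝ), ‖Sum.elim x y α s‖ ≤ Bα := by
    intro α
    have hcont : Continuous (Sum.elim x y α) := by
      rcases α with i | j
      · exact hsol.contx i
      · exact hsol.conty j
    obtain ⟨U, hU⟩ := (isCompact_Icc (a := -τ) (b := (0:ℝ))).bddAbove_image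
      (hcont.norm.continuousOn)
    exact ⟨U, fun s hs => hU ⟨s, hs, rfl⟩⟩
  choose Bf hBf using hBex
  haveI : Nonempty (Fin N) := ⟨⟨0, by omega⟩⟩
  haveI : Nonempty (Fin M) := ⟨⟨0, by omega⟩⟩
  obtain ⟨B0, hB0⟩ := Finite.exists_le Bf
  set B : ℝ := max 0 B0 with hBdef
  have hB0' : (0:ℝ) ≤ B := le_max_left _ _
  have hB : ∀ α : Fin N ⊕ Fin M, ∀ s ∈ Icc (-τ) (0:ℝ), ‖Sum.elim x y α s‖ ≤ B :=
    fun α s hs => le_trans (hBf α s hs) (le_trans (hB0 α) (le_max_right _ _))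
  -- the state bound C and the weight lower bound γ
  set C : ℝ := Real.sqrt d * B with hCdef
  have hC0 : (0:ℝ) ≤ C := mul_nonneg (Real.sqrt_nonneg _) hB0'
  have hKcomp : IsCompact ((Metric.closedBall (0:EuclideanSpace ℝ (Fin d)) C) ×ˢ (Metric.closedBall (0:EuclideanSpace ℝ (Fin d)) C)) :=
    (isCompact_closedBall (0:EuclideanSpace ℝ (Fin d)) C).prod (isCompact_closedBall (0:EuclideanSpace ℝ (Fin d)) C)
  have hKne : ((Metric.closedBall (0:EuclideanSpace ℝ (Fin d)) C) ×ˢ (Metric.closedBall (0:EuclideanSpace ℝ (Fin d)) C)).Nonempty :=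
    ⟨((0:EuclideanSpace ℝ (Fin d)), (0:EuclideanSpace ℝ (Fin d))), by simp [hC0]⟩
  have hmin4 : ∀ g : EuclideanSpace ℝ (Fin d) → EuclideanSpace ℝ (Fin d) → ℝ,
      Continuous (fun p : EuclideanSpace ℝ (Fin d) × EuclideanSpace ℝ (Fin d) => g p.1 p.2) → (∀ z₁ z₂, 0 < g z₁ z₂) →
      ∃ Γg : ℝ, 0 < Γg ∧ (∀ z₁ z₂, ‖z₁‖ ≤ C → ‖z₂‖ ≤ C → Γg ≤ g z₁ z₂) ∧
        ∃ z₁ z₂, Γg = g z₁ z₂ := by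
    intro g hgc hgp
    obtain ⟨p, hpK, hpmin⟩ := hKcomp.exists_isMinOn hKne hgc.continuousOn
    refine ⟨g p.1 p.2, hgp _ _, ?_, p.1, p.2, rfl⟩
    intro z₁ z₂ h1 h2
    exact hpmin (Set.mk_mem_prod (Metric.mem_closedBall.2 (by simpa using h1))
      (Metric.mem_closedBall.2 (by simpa using h2)))
  obtain ⟨Γψ, hΓψ0, hΓψmin, zψ1, zψ2, hΓψeq⟩ := hmin4 ψ hψc hψp
  obtain ⟨Γψs, hΓψs0, hΓψsmin, _, _, hΓψseq⟩ := hmin4 ψs hψsc hψsp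
  obtain ⟨Γφ, hΓφ0, hΓφmin, _, _, hΓφeq⟩ := hmin4 φ hφc hφp
  obtain ⟨Γφs, hΓφs0, hΓφsmin, _, _, hΓφseq⟩ := hmin4 φs hφsc hφsp
  set Γ : ℝ := min (min Γψ Γψs) (min Γφ Γφs) with hΓdef
  have hΓ0 : 0 < Γ := lt_min (lt_min hΓψ0 hΓψs0) (lt_min hΓφ0 hΓφs0)
  have hNM1 : (1:ℝ) ≤ (N:ℝ) + M := by
    have : (2:ℝ) ≤ N := by exact_mod_cast hN
    have : (0:ℝ) ≤ M := Nat.cast_nonneg M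
    linarith
  have hNM0 : (0:ℝ) < (N:ℝ) + M := lt_of_lt_of_le one_pos hNM1
  set γ : ℝ := Γ / ((N:ℝ) + M) with hγdef
  have hγ0 : 0 < γ := div_pos hΓ0 hNM0
  have hγΛ : γ ≤ Λ := by
    have h1 : γ ≤ Γ := div_le_self hΓ0.le hNM1
    have h2 : Γ ≤ Γψ := le_trans (min_le_left _ _) (min_le_left _ _)
    have h3 : Γψ ≤ Λ := by rw [hΓψeq]; exact hψΛ _ _
    linarith
  have hγNM : γ * ((N:ℝ) + M) = Γ := div_mul_cancel₀ Γ (ne_of_gt hNM0)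
  -- build the network
  obtain ⟨P, hPz⟩ := buildNet (Λ := Λ) (γ := γ) (C := C) hN hM2 hMN hh1 hhM hk1 hkN hτ hγ0 hγΛ
    hψp hψsp hφp hφsp hψΛ hψsΛ hφΛ hφsΛ
    (fun z₁ z₂ h1 h2 => by rw [hγNM]; exact le_trans (le_trans (min_le_left _ _) (min_le_left _ _)) (hΓψmin z₁ z₂ h1 h2))
    (fun z₁ z₂ h1 h2 => by rw [hγNM]; exact le_trans (le_trans (min_le_left _ _) (min_le_right _ _)) (hΓψsmin z₁ z₂ h1 h2))
    (fun z₁ z₂ h1 h2 => by rw [hγNM]; exact le_trans (le_trans (min_le_right _ _) (min_le_left _ _)) (hΓφmin z₁ z₂ h1 h2))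
    (fun z₁ z₂ h1 h2 => by rw [hγNM]; exact le_trans (le_trans (min_le_right _ _) (min_le_right _ _)) (hΓφsmin z₁ z₂ h1 h2))
    hsol
  have hinit : ∀ α, ∀ s ∈ Icc (-τ) (0:ℝ), ‖P.z α s‖ ≤ B := by
    rw [hPz]; exact hB
  have hball : ∀ α t, (0:ℝ) ≤ t → ‖P.z α t‖ ≤ C :=
    P.normBound B hB0' hinit hCdef
  -- coordinate bounds
  have hcoord : ∀ (l : Fin d) α t, (0:ℝ) ≤ t →
      -B ≤ P.u (EuclideanSpace.single l (1:ℝ)) α t ∧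
      P.u (EuclideanSpace.single l (1:ℝ)) α t ≤ B := by
    intro l α t ht
    have := P.coordBound B hinit l α t ht
    exact abs_le.1 this
  -- iterated contraction, per coordinate
  set c : ℝ := NetSys.cst τ Λ γ with hcdef
  have hc0 : 0 < c := P.cst_pos
  have hc2 : c ≤ 1/2 := P.cst_le_half
  have hiter : ∀ (n : ℕ) (l : Fin d), ∃ m K : ℝ, K - m ≤ (1 - c)^n * (2 * B) ∧
      ∀ α t, 6*(n:ℝ)*τ ≤ t → m ≤ P.u (EuclideanSpace.single l (1:ℝ)) α t ∧
        P.u (EuclideanSpace.single l (1:ℝ)) α t ≤ K := by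
    intro n l
    obtain ⟨m, K, hKm, hbd⟩ := P.iterate (EuclideanSpace.single l (1:ℝ)) hball (-B) B
      (fun α t ht => hcoord l α t ht) n
    exact ⟨m, K, by rw [show (2:ℝ)*B = B - (-B) by ring]; exact hKm, hbd⟩
  -- diameter bound
  have hdiam : ∀ (n : ℕ) (t : ℝ), 6*(n:ℝ)*τ ≤ t → ∀ α β : Fin N ⊕ Fin M,
      ‖P.z α t - P.z β t‖ ≤ Real.sqrt d * ((1 - c)^n * (2 * B)) := by
    intro n t ht α β
    have hδ0 : 0 ≤ (1 - c)^n * (2 * B) := by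
      have : (0:ℝ) ≤ 1 - c := by linarith
      positivity
    apply euclid_norm_le _ _ hδ0
    intro l
    obtain ⟨m, K, hKm, hbd⟩ := hiter n l
    have h1 := hbd α t ht
    have h2 := hbd β t ht
    rw [P.u_single] at h1 h2
    have : (P.z α t - P.z β t) l = P.z α t l - P.z β t l := by
      simp
    rw [this, abs_le]
    constructor <;> [linarith [h1.1, h2.2]; linarith [h1.2, h2.1]]
  -- conclusion
  have hFnonneg : ∀ t : ℝ,
      0 ≤ max (max (⨆ p : Fin N × Fin N, ‖x p.1 t - x p.2 t‖)
               (⨆ p : Fin M × Fin M, ‖y p.1 t - y p.2 t‖))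
          (⨆ p : Fin N × Fin M, ‖x p.1 t - y p.2 t‖) := by
    intro t
    refine le_trans ?_ (le_max_left _ _)
    refine le_trans ?_ (le_max_left _ _)
    refine le_trans ?_ (le_ciSup (Set.Finite.bddAbove (Set.finite_range _))
      ((Classical.arbitrary (Fin N)), (Classical.arbitrary (Fin N))))
    simp
  have hFle : ∀ (n : ℕ) (t : ℝ), 6*(n:ℝ)*τ ≤ t →
      max (max (⨆ p : Fin N × Fin N, ‖x p.1 t - x p.2 t‖)
               (⨆ p : Fin M × Fin M, ‖y p.1 t - y p.2 t‖))
          (⨆ p : Fin N × Fin M, ‖x p.1 t - y p.2 t‖) ≤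
        Real.sqrt d * ((1 - c)^n * (2 * B)) := by
    intro n t ht
    have hx : ∀ i : Fin N, x i t = P.z (Sum.inl i) t := by intro i; rw [hPz]; rfl
    have hy : ∀ j : Fin M, y j t = P.z (Sum.inr j) t := by intro j; rw [hPz]; rfl
    refine max_le (max_le ?_ ?_) ?_
    · refine ciSup_le fun p => ?_
      rw [hx, hx]; exact hdiam n t ht _ _
    · refine ciSup_le fun p => ?_
      rw [hy, hy]; exact hdiam n t ht _ _
    · refine ciSup_le fun p => ?_
      rw [hx, hy]; exact hdiam n t ht _ _
  -- the bound sequence tends to 0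
  have hGlim : Tendsto (fun n : ℕ => Real.sqrt d * ((1 - c)^n * (2 * B))) atTop (nhds 0) := by
    have h1 : Tendsto (fun n : ℕ => (1 - c)^n) atTop (nhds 0) :=
      tendsto_pow_atTop_nhds_zero_of_lt_one (by linarith) (by linarith)
    have h2 := (h1.const_mul (Real.sqrt d * (2 * B)))
    simp only [mul_zero] at h2
    convert h2 using 2 with n
    ring
  rw [Metric.tendsto_atTop]
  intro ε hε
  have hev : ∀ᶠ n : ℕ in atTop, Real.sqrt d * ((1 - c)^n * (2 * B)) < ε := by
    have := hGlim.eventually (eventually_lt_nhds hε) -- may need adjusting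
    exact this
  obtain ⟨n, hn⟩ := hev.exists
  refine ⟨6*(n:ℝ)*τ, fun t htt => ?_⟩
  rw [Real.dist_eq, sub_zero, abs_of_nonneg (hFnonneg t)]
  exact lt_of_le_of_lt (hFle n t htt) hn
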